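/- Fix x ∈ ℝ^d with ‖x‖ = 1, γ ∈ (0,1), and a constant C_0 > 0. With probability at least 1 − γ over the random initialization (W_0, a), the bound |f(x; a, W)| ≤ √(2·log(2/γ)) + 2·log(2/γ)/√m + C_0 holds simultaneously for all W ∈ B_{2,∞}(W_0, C_0/√m). -/

import Mathlib

open MeasureTheory ProbabilityTheory

/-- Product of `d` i.i.d. standard Gaussians: the law of a standard Gaussian
vector `N(0, I_d)` on `ℝ^d` (represented as `Fin d → ℝ`). -/
noncomputable def gaussVec (d : ℕ) : Measure (Fin d → ℝ) :=
  Measure.pi fun _ => gaussianReal 0 1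

/-- Law of `m` i.i.d. standard Gaussian vectors in `ℝ^d` (the initialization `W₀`). -/
noncomputable def gaussMat (m d : ℕ) : Measure (Fin m → Fin d → ℝ) :=
  Measure.pi fun _ => gaussVec d

/-- Law of `m` i.i.d. uniform random signs (encoded as booleans). -/
noncomputable def signsMeasure (m : ℕ) : Measure (Fin m → Bool) :=
  Measure.pi fun _ => (PMF.uniformOfFintype Bool).toMeasure

/-- Joint law of the random initialization `(W₀, a)`. -/
noncomputable def initMeasure (m d : ℕ) :
    Measure ((Fin m → Fin d → ℝ) × (Fin m → Bool)) :=
  (gaussMat m d).prod (signsMeasure m)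

/-- The sign `±1` encoded by a boolean. -/
def signOf (b : Bool) : ℝ := if b then 1 else -1

/-- Euclidean inner product on `Fin d → ℝ`. -/
def dotp {d : ℕ} (w x : Fin d → ℝ) : ℝ := ∑ i, w i * x i

/-- Euclidean norm on `Fin d → ℝ`. -/
noncomputable def euclNorm {d : ℕ} (w : Fin d → ℝ) : ℝ :=
  Real.sqrt (∑ i, (w i) ^ 2)

/-- Two-layer ReLU network `f(x; a, W) = (1/√m) ∑ₛ aₛ · max(0, ⟨wₛ, x⟩)`. -/
noncomputable def netF {m d : ℕ} (a : Fin m → Bool) (W : Fin m → Fin d → ℝ)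
    (x : Fin d → ℝ) : ℝ :=
  (1 / Real.sqrt m) * ∑ s, signOf (a s) * max 0 (dotp (W s) x)

/-- (a.e.) input gradient `G(x; a, W) = (1/√m) ∑ₛ aₛ · 𝟙[⟨wₛ, x⟩ > 0] · wₛ`. -/
noncomputable def netG {m d : ℕ} (a : Fin m → Bool) (W : Fin m → Fin d → ℝ)
    (x : Fin d → ℝ) : Fin d → ℝ :=
  fun i => (1 / Real.sqrt m) *
    ∑ s, signOf (a s) * (if 0 < dotp (W s) x then (1 : ℝ) else 0) * W s i

/-- `W ∈ B_{2,∞}(W₀, V)`: every column of `W` is within Euclidean distance `V`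
of the corresponding column of `W₀`. -/
def inBall {m d : ℕ} (W0 W : Fin m → Fin d → ℝ) (V : ℝ) : Prop :=
  ∀ s, euclNorm (fun i => W s i - W0 s i) ≤ V

/-! ### Auxiliary lemmas -/

open scoped ENNReal

instance gaussVec_prob (d : ℕ) : IsProbabilityMeasure (gaussVec d) := by
  unfold gaussVec; infer_instance

instance gaussMat_prob (m d : ℕ) : IsProbabilityMeasure (gaussMat m d) := by
  unfold gaussMat; infer_instance

instance signs_prob (m : ℕ) : IsProbabilityMeasure (signsMeasure m) := by
  unfold signsMeasure; infer_instance

instance init_prob (m d : ℕ) : IsProbabilityMeasure (initMeasure m d) := by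
  unfold initMeasure; infer_instance

/-- Tonelli for a product of single-coordinate functions over a finite product measure. -/
lemma lintegral_pi_prod_fin {n : ℕ} {α : Fin n → Type*} [∀ i, MeasurableSpace (α i)]
    (μ : ∀ i, Measure (α i)) [∀ i, SigmaFinite (μ i)]
    (f : ∀ i, α i → ℝ≥0∞) (hf : ∀ i, Measurable (f i)) :
    ∫⁻ y, ∏ i, f i (y i) ∂(Measure.pi μ) = ∏ i, ∫⁻ a, f i a ∂(μ i) := by
  induction n with
  | zero => simp [lintegral_one, Measure.pi_univ]
  | succ n ih =>
      have h := ((measurePreserving_piFinSuccAbove μ 0).symm)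
      rw [← h.map_eq, lintegral_map_equiv]
      simp_rw [MeasurableEquiv.piFinSuccAbove_symm_apply, Fin.insertNthEquiv,
        Fin.prod_univ_succ, Fin.insertNth_zero, Equiv.coe_fn_mk, Fin.cons_succ,
        Fin.cons_zero]
      rw [← ih (fun j => μ j.succ) (fun j => f j.succ) (fun j => hf j.succ)]
      exact lintegral_prod_mul (μ := μ 0) (ν := Measure.pi fun j : Fin n => μ j.succ) (f := f 0)
        (g := fun b : (j : Fin n) → α j.succ => ∏ j : Fin n, f j.succ (b j))
        (hf 0).aemeasurable
        (Finset.measurable_prod Finset.univ fun j _ =>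
          (hf j.succ).comp (measurable_pi_apply j)).aemeasurable

private lemma exp_shift (c A B D C : ℝ) (h : A + B = D + C) :
    c * Real.exp A * Real.exp B = Real.exp D * (c * Real.exp C) := by
  rw [mul_assoc, ← Real.exp_add, h, Real.exp_add]; ring

/-- MGF of the standard Gaussian, `lintegral` form. -/
lemma lintegral_exp_gauss (t : ℝ) :
    ∫⁻ w, ENNReal.ofReal (Real.exp (t * w)) ∂(gaussianReal 0 1)
      = ENNReal.ofReal (Real.exp (t ^ 2 / 2)) := by
  have hg : Measurable fun w : ℝ => ENNReal.ofReal (Real.exp (t * w)) :=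
    (Real.measurable_exp.comp (measurable_id.const_mul t)).ennreal_ofReal
  rw [gaussianReal_of_var_ne_zero 0 one_ne_zero,
    lintegral_withDensity_eq_lintegral_mul _ (measurable_gaussianPDF 0 1) hg]
  have key : ∀ w : ℝ, (gaussianPDF 0 1 * fun w => ENNReal.ofReal (Real.exp (t * w))) w
      = ENNReal.ofReal (Real.exp (t ^ 2 / 2)) * ENNReal.ofReal (gaussianPDFReal t 1 w) := by
    intro w
    simp only [Pi.mul_apply, gaussianPDF]
    rw [← ENNReal.ofReal_mul (gaussianPDFReal_nonneg 0 1 w),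
      ← ENNReal.ofReal_mul (Real.exp_nonneg _)]
    congr 1
    simp only [gaussianPDFReal]
    exact exp_shift _ _ _ _ _ (by push_cast; ring)
  simp_rw [key]
  rw [lintegral_const_mul _ (measurable_gaussianPDFReal t 1).ennreal_ofReal,
    lintegral_gaussianPDFReal_eq_one t one_ne_zero, mul_one]

lemma measurable_dotp {d : ℕ} (x : Fin d → ℝ) :
    Measurable fun w : Fin d → ℝ => dotp w x := by
  unfold dotp
  exact Finset.measurable_sum _ fun i _ => (measurable_pi_apply i : Measurable fun w : Fin d → ℝ => w i).mul_const (x i)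

/-- MGF of a linear functional of a standard Gaussian vector. -/
lemma lintegral_exp_dotp (d : ℕ) (x : Fin d → ℝ) (u : ℝ) :
    ∫⁻ w, ENNReal.ofReal (Real.exp (u * dotp w x)) ∂(gaussVec d)
      = ENNReal.ofReal (Real.exp (u ^ 2 * (∑ i, x i ^ 2) / 2)) := by
  have h2 : ∀ w : Fin d → ℝ, ENNReal.ofReal (Real.exp (u * dotp w x))
      = ∏ i, ENNReal.ofReal (Real.exp ((u * x i) * w i)) := by
    intro w
    rw [show u * dotp w x = ∑ i, (u * x i) * w i by
        unfold dotp; rw [Finset.mul_sum]; exact Finset.sum_congr rfl fun i _ => by ring,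
      Real.exp_sum, ENNReal.ofReal_prod_of_nonneg (fun i _ => Real.exp_nonneg _)]
  simp_rw [h2]
  unfold gaussVec
  rw [lintegral_pi_prod_fin (fun _ => gaussianReal 0 1)
    (fun i => fun a => ENNReal.ofReal (Real.exp ((u * x i) * a)))
    (fun i => (Real.measurable_exp.comp (measurable_id.const_mul (u * x i))).ennreal_ofReal)]
  simp_rw [lintegral_exp_gauss]
  rw [← ENNReal.ofReal_prod_of_nonneg (fun i _ => Real.exp_nonneg _), ← Real.exp_sum]
  congr 2
  rw [Finset.mul_sum, Finset.sum_div]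
  exact Finset.sum_congr rfl fun i _ => by ring

/-- `cosh`-type comparison: replacing `max 0 g` by `g` only increases the symmetrized
exponential. -/
lemma cosh_relu_le (u g : ℝ) :
    Real.exp (u * max 0 g) + Real.exp (-(u * max 0 g))
      ≤ Real.exp (u * g) + Real.exp (-(u * g)) := by
  rcases le_or_gt g 0 with hg | hg
  · rw [max_eq_left hg]
    simp only [mul_zero, neg_zero, Real.exp_zero]
    have h1 := Real.exp_pos (u * g)
    have h2 := Real.exp_pos (-(u * g))
    have h3 : Real.exp (u * g) * Real.exp (-(u * g)) = 1 := by
      rw [← Real.exp_add]; simp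
    nlinarith [sq_nonneg (Real.exp (u * g) - 1)]
  · rw [max_eq_right hg.le]

lemma ofReal_half_add (A B : ℝ) (hA : 0 ≤ A) (hB : 0 ≤ B) :
    ENNReal.ofReal ((A + B) / 2)
      = (ENNReal.ofReal A + ENNReal.ofReal B) * ENNReal.ofReal (1 / 2) := by
  rw [← ENNReal.ofReal_add hA hB, ← ENNReal.ofReal_mul (by positivity)]
  congr 1; ring

lemma ofReal_half : ENNReal.ofReal (1 / 2) = 2⁻¹ := by
  rw [show (1 : ℝ) / 2 = 2⁻¹ by norm_num, ENNReal.ofReal_inv_of_pos two_pos]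
  norm_num

/-- Integral over a uniform random sign. -/
lemma lintegral_sign (u r : ℝ) :
    ∫⁻ b, ENNReal.ofReal (Real.exp (u * (signOf b * r)))
        ∂(PMF.uniformOfFintype Bool).toMeasure
      = ENNReal.ofReal ((Real.exp (u * r) + Real.exp (-(u * r))) / 2) := by
  have hμ : ∀ b : Bool, (PMF.uniformOfFintype Bool).toMeasure {b} = 2⁻¹ := by
    intro b
    rw [PMF.toMeasure_apply_singleton _ _ (measurableSet_singleton _),
      PMF.uniformOfFintype_apply]
    norm_num
  rw [lintegral_fintype, Fintype.sum_bool, hμ, hμ]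
  have h1 : signOf true = 1 := rfl
  have h2 : signOf false = -1 := rfl
  rw [h1, h2, show u * ((1 : ℝ) * r) = u * r by ring,
    show u * ((-1 : ℝ) * r) = -(u * r) by ring,
    ofReal_half_add _ _ (Real.exp_nonneg _) (Real.exp_nonneg _), ofReal_half, add_mul]

/-- The key MGF bound for the network output at initialization. -/
lemma mgf_le (d m : ℕ) (x : Fin d → ℝ) (hx : ∑ i, x i ^ 2 = 1) (u : ℝ) :
    ∫⁻ p, ENNReal.ofReal
        (Real.exp (∑ s, u * (signOf (p.2 s) * max 0 (dotp (p.1 s) x))))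
        ∂(initMeasure m d)
      ≤ ENNReal.ofReal (Real.exp (m * u ^ 2 / 2)) := by
  have hRmeas : Measurable (fun w : Fin d → ℝ => max 0 (dotp w x)) :=
    measurable_const.max (measurable_dotp x)
  have hfac : ∀ s : Fin m, Measurable (fun p : (Fin m → Fin d → ℝ) × (Fin m → Bool) =>
      ENNReal.ofReal (Real.exp (u * (signOf (p.2 s) * max 0 (dotp (p.1 s) x))))) := by
    intro s
    apply Measurable.ennreal_ofReal
    apply Real.measurable_exp.comp
    apply Measurable.const_mul
    exact ((Measurable.of_discrete (f := signOf)).comp ((measurable_pi_apply s).comp measurable_snd)).mul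
      (hRmeas.comp ((measurable_pi_apply s).comp measurable_fst))
  have hprod : ∀ p : (Fin m → Fin d → ℝ) × (Fin m → Bool),
      ENNReal.ofReal (Real.exp (∑ s, u * (signOf (p.2 s) * max 0 (dotp (p.1 s) x))))
      = ∏ s, ENNReal.ofReal (Real.exp (u * (signOf (p.2 s) * max 0 (dotp (p.1 s) x)))) := by
    intro p
    rw [Real.exp_sum, ENNReal.ofReal_prod_of_nonneg (fun _ _ => Real.exp_nonneg _)]
  simp_rw [hprod]
  unfold initMeasure
  rw [lintegral_prod _ (Finset.measurable_prod Finset.univ fun s _ => hfac s).aemeasurable]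
  have inner_eq : ∀ W : Fin m → Fin d → ℝ,
      (∫⁻ a, ∏ s, ENNReal.ofReal (Real.exp (u * (signOf (a s) * max 0 (dotp (W s) x))))
        ∂(signsMeasure m))
      = ∏ s, ENNReal.ofReal ((Real.exp (u * max 0 (dotp (W s) x))
          + Real.exp (-(u * max 0 (dotp (W s) x)))) / 2) := by
    intro W
    unfold signsMeasure
    rw [lintegral_pi_prod_fin (fun _ => (PMF.uniformOfFintype Bool).toMeasure)
      (fun s => fun b => ENNReal.ofReal (Real.exp (u * (signOf b * max 0 (dotp (W s) x)))))
      (fun s => Measurable.of_discrete)]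
    exact Finset.prod_congr rfl fun s _ => lintegral_sign u _
  simp_rw [inner_eq]
  have hψm : Measurable (fun w : Fin d → ℝ => ENNReal.ofReal ((Real.exp (u * dotp w x)
      + Real.exp (-(u * dotp w x))) / 2)) := by
    apply Measurable.ennreal_ofReal
    apply Measurable.div_const
    exact (Real.measurable_exp.comp ((measurable_dotp x).const_mul u)).add
      (Real.measurable_exp.comp (((measurable_dotp x).const_mul u).neg))
  calc ∫⁻ W, ∏ s, ENNReal.ofReal ((Real.exp (u * max 0 (dotp (W s) x))
          + Real.exp (-(u * max 0 (dotp (W s) x)))) / 2) ∂(gaussMat m d)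
      ≤ ∫⁻ W, ∏ s, ENNReal.ofReal ((Real.exp (u * dotp (W s) x)
          + Real.exp (-(u * dotp (W s) x))) / 2) ∂(gaussMat m d) := by
        refine lintegral_mono fun W => Finset.prod_le_prod' fun s _ => ?_
        refine ENNReal.ofReal_le_ofReal ?_
        have := cosh_relu_le u (dotp (W s) x)
        linarith
    _ = ∏ _s : Fin m, ∫⁻ w, ENNReal.ofReal ((Real.exp (u * dotp w x)
          + Real.exp (-(u * dotp w x))) / 2) ∂(gaussVec d) := by
        unfold gaussMat
        exact lintegral_pi_prod_fin (fun _ => gaussVec d)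
          (fun _ => fun w => ENNReal.ofReal ((Real.exp (u * dotp w x)
            + Real.exp (-(u * dotp w x))) / 2))
          (fun _ => hψm)
    _ ≤ ENNReal.ofReal (Real.exp (m * u ^ 2 / 2)) := by
        have hone : ∫⁻ w, ENNReal.ofReal ((Real.exp (u * dotp w x)
            + Real.exp (-(u * dotp w x))) / 2) ∂(gaussVec d)
            = ENNReal.ofReal (Real.exp (u ^ 2 / 2)) := by
          have hsplit : ∀ w : Fin d → ℝ, ENNReal.ofReal ((Real.exp (u * dotp w x)
              + Real.exp (-(u * dotp w x))) / 2)
              = (ENNReal.ofReal (Real.exp (u * dotp w x))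
                + ENNReal.ofReal (Real.exp ((-u) * dotp w x))) * ENNReal.ofReal (1 / 2) := by
            intro w
            rw [ofReal_half_add _ _ (Real.exp_nonneg _) (Real.exp_nonneg _), neg_mul]
          have hg1 : Measurable fun w : Fin d → ℝ =>
              ENNReal.ofReal (Real.exp (u * dotp w x)) :=
            (Real.measurable_exp.comp ((measurable_dotp x).const_mul u)).ennreal_ofReal
          have hg2 : Measurable fun w : Fin d → ℝ =>
              ENNReal.ofReal (Real.exp (-u * dotp w x)) :=
            (Real.measurable_exp.comp ((measurable_dotp x).const_mul (-u))).ennreal_ofReal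
          simp_rw [hsplit]
          rw [lintegral_mul_const _ (f := fun w => ENNReal.ofReal (Real.exp (u * dotp w x))
              + ENNReal.ofReal (Real.exp (-u * dotp w x))) (hg1.add hg2), lintegral_add_left hg1,
            lintegral_exp_dotp, lintegral_exp_dotp, hx, neg_sq, mul_one, ofReal_half]
          rw [← two_mul, mul_comm (2 : ℝ≥0∞), mul_assoc,
            ENNReal.mul_inv_cancel (by norm_num) (by norm_num), mul_one]
        rw [hone, Finset.prod_const, Finset.card_univ, Fintype.card_fin,
          ← ENNReal.ofReal_pow (Real.exp_nonneg _), ← Real.exp_nat_mul]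
        apply le_of_eq
        congr 1
        ring

/-- Chernoff bound from an MGF `lintegral` bound. -/
lemma chernoff {Ω : Type*} [MeasurableSpace Ω] (μ : Measure Ω) (Z : Ω → ℝ)
    (t : ℝ) (ht : 0 ≤ t) (hZ : Measurable Z)
    (hm : ∫⁻ p, ENNReal.ofReal (Real.exp (t * Z p)) ∂μ ≤ ENNReal.ofReal (Real.exp (t ^ 2 / 2))) :
    μ {p | t ≤ Z p} ≤ ENNReal.ofReal (Real.exp (-(t ^ 2) / 2)) := by
  have hsub : {p | t ≤ Z p} ⊆
      {p | ENNReal.ofReal (Real.exp (t * t)) ≤ ENNReal.ofReal (Real.exp (t * Z p))} := by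
    intro p hp
    exact ENNReal.ofReal_le_ofReal (Real.exp_le_exp.2 (mul_le_mul_of_nonneg_left hp ht))
  have hmeas : AEMeasurable (fun p => ENNReal.ofReal (Real.exp (t * Z p))) μ :=
    ((Real.measurable_exp.comp (hZ.const_mul t)).ennreal_ofReal).aemeasurable
  have key := mul_meas_ge_le_lintegral₀ hmeas (ENNReal.ofReal (Real.exp (t * t)))
  have h1 : ENNReal.ofReal (Real.exp (t * t)) * μ {p | t ≤ Z p}
      ≤ ENNReal.ofReal (Real.exp (t ^ 2 / 2)) :=
    le_trans (le_trans (mul_le_mul_right (measure_mono hsub) _) key) hm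
  have hne : ENNReal.ofReal (Real.exp (t * t)) ≠ 0 := by
    simp [Real.exp_pos]
  have htop : ENNReal.ofReal (Real.exp (t * t)) ≠ ⊤ := ENNReal.ofReal_ne_top
  have h2 : μ {p | t ≤ Z p} ≤ ENNReal.ofReal (Real.exp (t ^ 2 / 2))
      / ENNReal.ofReal (Real.exp (t * t)) := by
    rw [ENNReal.le_div_iff_mul_le (Or.inl hne) (Or.inl htop), mul_comm]
    exact h1
  refine h2.trans (le_of_eq ?_)
  rw [← ENNReal.ofReal_div_of_pos (Real.exp_pos _), ← Real.exp_sub]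
  congr 1
  ring_nf

lemma abs_dotp_le {d : ℕ} (w x : Fin d → ℝ) : |dotp w x| ≤ euclNorm w * euclNorm x := by
  unfold dotp euclNorm
  have h := Finset.sum_mul_sq_le_sq_mul_sq Finset.univ w x
  have h2 : |∑ i, w i * x i| = Real.sqrt ((∑ i, w i * x i) ^ 2) :=
    (Real.sqrt_sq_eq_abs _).symm
  rw [h2, ← Real.sqrt_mul (by positivity)]
  exact Real.sqrt_le_sqrt h

/-- Perturbation bound: moving each column by at most `V` moves the output by at
most `√m · V`. -/
lemma netF_perturb {m d : ℕ} (a : Fin m → Bool) (W0 W : Fin m → Fin d → ℝ)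
    (x : Fin d → ℝ) (hx : euclNorm x = 1) (V : ℝ) (hball : inBall W0 W V) :
    |netF a W x - netF a W0 x| ≤ Real.sqrt m * V := by
  have key : ∀ s : Fin m,
      |signOf (a s) * max 0 (dotp (W s) x) - signOf (a s) * max 0 (dotp (W0 s) x)| ≤ V := by
    intro s
    rw [← mul_sub, abs_mul]
    have hs : |signOf (a s)| = 1 := by
      unfold signOf; rcases a s <;> simp
    rw [hs, one_mul]
    have h1 : |max 0 (dotp (W s) x) - max 0 (dotp (W0 s) x)|
        ≤ |dotp (W s) x - dotp (W0 s) x| := by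
      rw [max_comm 0 (dotp (W s) x), max_comm 0 (dotp (W0 s) x)]
      exact abs_max_sub_max_le_abs _ _ _
    have h2 : dotp (W s) x - dotp (W0 s) x = dotp (fun i => W s i - W0 s i) x := by
      unfold dotp
      rw [← Finset.sum_sub_distrib]
      exact Finset.sum_congr rfl fun i _ => by ring
    refine h1.trans ?_
    rw [h2]
    calc |dotp (fun i => W s i - W0 s i) x|
        ≤ euclNorm (fun i => W s i - W0 s i) * euclNorm x := abs_dotp_le _ _
      _ = euclNorm (fun i => W s i - W0 s i) := by rw [hx, mul_one]
      _ ≤ V := hball s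
  have hdiff : netF a W x - netF a W0 x
      = (1 / Real.sqrt m) * ∑ s, (signOf (a s) * max 0 (dotp (W s) x)
          - signOf (a s) * max 0 (dotp (W0 s) x)) := by
    unfold netF
    rw [Finset.sum_sub_distrib, mul_sub]
  rw [hdiff, abs_mul, abs_of_nonneg (by positivity : (0:ℝ) ≤ 1 / Real.sqrt m)]
  calc (1 / Real.sqrt m) * |∑ s, (signOf (a s) * max 0 (dotp (W s) x)
          - signOf (a s) * max 0 (dotp (W0 s) x))|
      ≤ (1 / Real.sqrt m) * (m * V) := by
        refine mul_le_mul_of_nonneg_left ?_ (by positivity)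
        refine (Finset.abs_sum_le_sum_abs _ _).trans ?_
        calc ∑ s, |signOf (a s) * max 0 (dotp (W s) x)
                - signOf (a s) * max 0 (dotp (W0 s) x)|
            ≤ ∑ _s : Fin m, V := Finset.sum_le_sum fun s _ => key s
          _ = m * V := by rw [Finset.sum_const, Finset.card_univ, Fintype.card_fin,
              nsmul_eq_mul]
    _ = Real.sqrt m * V := by
        rw [← mul_assoc, mul_comm (1 / Real.sqrt m), mul_one_div, Real.div_sqrt]

/-- Lemma bounding the function value, explicit form: with probability at
least `1 - γ`, `|f(x; a, W)| ≤ √(2·log(2/γ)) + 2·log(2/γ)/√m + C₀` simultaneously for all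
`W` in the lazy-regime ball. -/
theorem function_value_bound_explicit (d m : ℕ) (x : Fin d → ℝ) (γ C0 : ℝ)
    (hx : euclNorm x = 1) (hγ0 : 0 < γ) (hγ1 : γ < 1) (hC0 : 0 < C0) :
    ENNReal.ofReal (1 - γ) ≤
      initMeasure m d
        {p | ∀ W : Fin m → Fin d → ℝ, inBall p.1 W (C0 / Real.sqrt m) →
          |netF p.2 W x| ≤
            Real.sqrt (2 * Real.log (2 / γ)) + 2 * Real.log (2 / γ) / Real.sqrt m + C0} := by
  set L := Real.log (2 / γ) with hLdef
  have hL : 0 < L := Real.log_pos ((one_lt_div hγ0).2 (by linarith))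
  set t := Real.sqrt (2 * L) with htdef
  have ht0 : 0 ≤ t := Real.sqrt_nonneg _
  have ht2 : t ^ 2 = 2 * L := Real.sq_sqrt (by positivity)
  have hmid : 0 ≤ 2 * L / Real.sqrt m :=
    div_nonneg (by positivity) (Real.sqrt_nonneg _)
  rcases Nat.eq_zero_or_pos m with hm | hm
  · subst hm
    calc ENNReal.ofReal (1 - γ) ≤ 1 := ENNReal.ofReal_le_one.2 (by linarith)
      _ = initMeasure 0 d Set.univ := measure_univ.symm
      _ ≤ _ := by
          refine measure_mono fun p _ W _ => ?_
          have h0 : netF p.2 W x = 0 := by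
            unfold netF
            simp
          rw [h0, abs_zero]
          linarith
  · have hm' : (0 : ℝ) < m := by exact_mod_cast hm
    have hms : 0 < Real.sqrt m := Real.sqrt_pos.2 hm'
    have hx2 : ∑ i, x i ^ 2 = 1 := by
      unfold euclNorm at hx
      exact Real.sqrt_eq_one.1 hx
    set Z : (Fin m → Fin d → ℝ) × (Fin m → Bool) → ℝ := fun p => netF p.2 p.1 x with hZdef
    have hZ : Measurable Z := by
      apply Measurable.const_mul
      exact Finset.measurable_sum _ fun s _ =>
        ((Measurable.of_discrete (f := signOf)).comp ((measurable_pi_apply s).comp measurable_snd)).mul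
          (measurable_const.max
            ((measurable_dotp x).comp ((measurable_pi_apply s).comp measurable_fst)))
    have hmgf : ∀ τ : ℝ, ∫⁻ p, ENNReal.ofReal (Real.exp (τ * Z p)) ∂(initMeasure m d)
        ≤ ENNReal.ofReal (Real.exp (τ ^ 2 / 2)) := by
      intro τ
      have hrw : ∀ p : (Fin m → Fin d → ℝ) × (Fin m → Bool),
          τ * Z p = ∑ s, (τ / Real.sqrt m) * (signOf (p.2 s) * max 0 (dotp (p.1 s) x)) := by
        intro p
        show τ * ((1 / Real.sqrt m) * ∑ s, signOf (p.2 s) * max 0 (dotp (p.1 s) x)) = _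
        rw [← mul_assoc, mul_one_div, Finset.mul_sum]
      simp_rw [hrw]
      refine (mgf_le d m x hx2 (τ / Real.sqrt m)).trans
        (ENNReal.ofReal_le_ofReal (Real.exp_le_exp.2 (le_of_eq ?_)))
      rw [div_pow, Real.sq_sqrt (Nat.cast_nonneg m)]
      field_simp
    have hhalf : Real.exp (-(t ^ 2) / 2) = γ / 2 := by
      rw [ht2, show -(2 * L) / 2 = -L by ring, Real.exp_neg, hLdef,
        Real.exp_log (by positivity), inv_div]
    have hup := chernoff (initMeasure m d) Z t ht0 hZ (hmgf t)
    have hdown : initMeasure m d {p | t ≤ -Z p}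
        ≤ ENNReal.ofReal (Real.exp (-(t ^ 2) / 2)) := by
      refine chernoff (initMeasure m d) (fun p => -Z p) t ht0 hZ.neg ?_
      have hneg : ∀ p : (Fin m → Fin d → ℝ) × (Fin m → Bool),
          t * -Z p = (-t) * Z p := fun p => by ring
      simp_rw [hneg]
      refine (hmgf (-t)).trans (le_of_eq ?_)
      rw [neg_pow]
      norm_num
    set A := {p : (Fin m → Fin d → ℝ) × (Fin m → Bool) | |Z p| ≤ t} with hAdef
    have hAmeas : MeasurableSet A := measurableSet_le hZ.abs measurable_const
    have hsub2 : Aᶜ ⊆ {p | t ≤ Z p} ∪ {p | t ≤ -Z p} := by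
      intro p hp
      simp only [hAdef, Set.mem_compl_iff, Set.mem_setOf_eq, not_le] at hp
      rcases lt_abs.1 hp with h | h
      · exact Or.inl h.le
      · exact Or.inr h.le
    have hAc : initMeasure m d Aᶜ ≤ ENNReal.ofReal γ := by
      refine (measure_mono hsub2).trans ((measure_union_le _ _).trans ?_)
      have e1 : initMeasure m d {p | t ≤ Z p} ≤ ENNReal.ofReal (γ / 2) :=
        hup.trans (le_of_eq (by rw [hhalf]))
      have e2 : initMeasure m d {p | t ≤ -Z p} ≤ ENNReal.ofReal (γ / 2) :=
        hdown.trans (le_of_eq (by rw [hhalf]))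
      calc initMeasure m d {p | t ≤ Z p} + initMeasure m d {p | t ≤ -Z p}
          ≤ ENNReal.ofReal (γ / 2) + ENNReal.ofReal (γ / 2) := add_le_add e1 e2
        _ = ENNReal.ofReal γ := by
            rw [← ENNReal.ofReal_add (by positivity) (by positivity)]
            norm_num
    have hAS : A ⊆ {p : (Fin m → Fin d → ℝ) × (Fin m → Bool) |
        ∀ W : Fin m → Fin d → ℝ, inBall p.1 W (C0 / Real.sqrt m) →
          |netF p.2 W x| ≤ t + 2 * L / Real.sqrt m + C0} := by
      intro p hp W hball
      have hb := netF_perturb p.2 p.1 W x hx (C0 / Real.sqrt m) hball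
      have hc : Real.sqrt m * (C0 / Real.sqrt m) = C0 := by
        field_simp
      rw [hc] at hb
      have hzp : |Z p| ≤ t := hp
      have habs : |netF p.2 W x| ≤ |netF p.2 W x - netF p.2 p.1 x| + |netF p.2 p.1 x| := by
        have := abs_add_le (netF p.2 W x - netF p.2 p.1 x) (netF p.2 p.1 x)
        simpa using this
      have hZp : |netF p.2 p.1 x| = |Z p| := rfl
      rw [hZp] at habs
      linarith
    have h1 : initMeasure m d A = 1 - initMeasure m d Aᶜ := by
      have h := prob_compl_eq_one_sub (μ := initMeasure m d) hAmeas.compl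
      rw [compl_compl] at h
      exact h
    calc ENNReal.ofReal (1 - γ)
        = 1 - ENNReal.ofReal γ := by
          rw [ENNReal.ofReal_sub _ hγ0.le, ENNReal.ofReal_one]
      _ ≤ 1 - initMeasure m d Aᶜ := tsub_le_tsub_left hAc 1
      _ = initMeasure m d A := h1.symm
      _ ≤ _ := measure_mono hAS
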